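/- For every z ∈ ℂ∖[−1,1], (1/π) ∫_{−1}^{1} log|t−z| / √(1−t²) dt = −log|J₊⁻¹(z)| − log 2. -/

import Mathlib

open MeasureTheory Filter Set
open Complex

lemma sqrt_re_nonneg' (x : ℂ) : 0 ≤ (x ^ ((1:ℂ)/2)).re := by
  rcases eq_or_ne x 0 with rfl | hx
  · simp [Complex.zero_cpow (by norm_num : ((1:ℂ)/2) ≠ 0)]
  · rw [Complex.cpow_def_of_ne_zero hx, Complex.exp_re]
    apply mul_nonneg (Real.exp_nonneg _)
    apply Real.cos_nonneg_of_mem_Icc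
    constructor
    · have := Complex.neg_pi_lt_arg x
      simp [Complex.log_im, Complex.mul_im, Complex.log_re]
      nlinarith [Real.pi_pos]
    · have := Complex.arg_le_pi x
      simp [Complex.log_im, Complex.mul_im, Complex.log_re]
      nlinarith [Real.pi_pos]

lemma sqrt_im_nonneg' (x : ℂ) (hx : 0 ≤ x.im) : 0 ≤ (x ^ ((1:ℂ)/2)).im := by
  rcases eq_or_ne x 0 with rfl | hx0
  · simp [Complex.zero_cpow (by norm_num : ((1:ℂ)/2) ≠ 0)]
  · rw [Complex.cpow_def_of_ne_zero hx0, Complex.exp_im]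
    apply mul_nonneg (Real.exp_nonneg _)
    apply Real.sin_nonneg_of_nonneg_of_le_pi
    · have := Complex.arg_nonneg_iff.2 hx
      simp [Complex.log_im, Complex.mul_im, Complex.log_re]
      nlinarith
    · have := Complex.arg_le_pi x
      simp [Complex.log_im, Complex.mul_im, Complex.log_re]
      nlinarith [Real.pi_pos]

lemma sqrt_mul_self' (x : ℂ) (hx : x ≠ 0) : x ^ ((1:ℂ)/2) * x ^ ((1:ℂ)/2) = x := by
  rw [← Complex.cpow_add _ _ hx]
  norm_num

/-- The inverse Joukowsky transform mapping the slit plane to the unit disk,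
`J₊⁻¹(z) = z - (z-1)^{1/2} (z+1)^{1/2}` with principal-branch square roots. -/
noncomputable def Jinv (z : ℂ) : ℂ :=
  z - (z - 1) ^ ((1 : ℂ) / 2) * (z + 1) ^ ((1 : ℂ) / 2)

lemma not_seg {z : ℂ} (hz : z ∉ Complex.ofReal '' Set.Icc (-1 : ℝ) 1)
    (him : z.im = 0) : z.re < -1 ∨ 1 < z.re := by
  by_contra h
  push_neg at h
  exact hz ⟨z.re, ⟨h.1, h.2⟩, by exact Complex.ext rfl him.symm⟩

lemma zsub_ne {z : ℂ} (hz : z ∉ Complex.ofReal '' Set.Icc (-1 : ℝ) 1) : z - 1 ≠ 0 := by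
  intro h
  exact hz ⟨1, by norm_num, by rw [sub_eq_zero] at h; simp [h.symm]⟩

lemma zadd_ne {z : ℂ} (hz : z ∉ Complex.ofReal '' Set.Icc (-1 : ℝ) 1) : z + 1 ≠ 0 := by
  intro h
  refine hz ⟨-1, by norm_num, ?_⟩
  have : z = -1 := by linear_combination h
  simp [this]

set_option maxHeartbeats 1000000 in
lemma key_re_pos {z : ℂ} (hz : z ∉ Complex.ofReal '' Set.Icc (-1 : ℝ) 1) :
    0 < ((z - 1) ^ ((1:ℂ)/2)).re * ((z + 1) ^ ((1:ℂ)/2)).re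
      + ((z - 1) ^ ((1:ℂ)/2)).im * ((z + 1) ^ ((1:ℂ)/2)).im := by
  set b := (z - 1) ^ ((1:ℂ)/2) with hbdef
  set a := (z + 1) ^ ((1:ℂ)/2) with hadef
  have hbne := zsub_ne hz
  have hane := zadd_ne hz
  have hb2 : b * b = z - 1 := sqrt_mul_self' _ hbne
  have ha2 : a * a = z + 1 := sqrt_mul_self' _ hane
  have hbre : 0 ≤ b.re := sqrt_re_nonneg' _
  have hare : 0 ≤ a.re := sqrt_re_nonneg' _
  have hbim : b.re * b.im + b.im * b.re = z.im := by
    have := congrArg Complex.im hb2; simpa [Complex.mul_im] using this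
  have haim : a.re * a.im + a.im * a.re = z.im := by
    have := congrArg Complex.im ha2; simpa [Complex.mul_im] using this
  have hbreim : b.re * b.re - b.im * b.im = z.re - 1 := by
    have := congrArg Complex.re hb2; simpa [Complex.mul_re] using this
  have hareim : a.re * a.re - a.im * a.im = z.re + 1 := by
    have := congrArg Complex.re ha2; simpa [Complex.mul_re] using this
  rcases lt_trichotomy z.im 0 with him | him | him
  · -- Im z < 0 : re > 0, im < 0 for both
    have hb' : b.re * b.im < 0 := by nlinarith
    have ha' : a.re * a.im < 0 := by nlinarith
    have hbrp : 0 < b.re := lt_of_le_of_ne hbre (fun h => by rw [← h] at hb'; simp at hb')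
    have harp : 0 < a.re := lt_of_le_of_ne hare (fun h => by rw [← h] at ha'; simp at ha')
    have hbin : b.im < 0 := by nlinarith
    have hain : a.im < 0 := by nlinarith
    nlinarith [mul_pos hbrp harp, mul_pos_of_neg_of_neg hbin hain]
  · -- real case
    rcases not_seg hz him with hre | hre
    · -- z.re < -1 : a.re = b.re = 0, a.im, b.im > 0
      have haim0 : 0 ≤ a.im := sqrt_im_nonneg' _ (by simp [him])
      have hbim0 : 0 ≤ b.im := sqrt_im_nonneg' _ (by simp [him])
      have ha_im_pos : 0 < a.im := by nlinarith
      have hb_im_pos : 0 < b.im := by nlinarith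
      have : a.re = 0 := by nlinarith
      have : b.re = 0 := by nlinarith
      nlinarith
    · -- z.re > 1 : a.im = b.im = 0, re > 0
      have hare_pos : 0 < a.re := by nlinarith
      have hbre_pos : 0 < b.re := by nlinarith
      have : a.im = 0 := by nlinarith
      have : b.im = 0 := by nlinarith
      nlinarith
  · have hb' : 0 < b.re * b.im := by nlinarith
    have ha' : 0 < a.re * a.im := by nlinarith
    have hbrp : 0 < b.re := lt_of_le_of_ne hbre (fun h => by rw [← h] at hb'; simp at hb')
    have harp : 0 < a.re := lt_of_le_of_ne hare (fun h => by rw [← h] at ha'; simp at ha')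
    have hbin : 0 < b.im := by nlinarith
    have hain : 0 < a.im := by nlinarith
    nlinarith [mul_pos hbrp harp, mul_pos hbin hain]

lemma Jinv_quad {z : ℂ} (hz : z ∉ Complex.ofReal '' Set.Icc (-1 : ℝ) 1) :
    Jinv z * Jinv z - 2 * z * Jinv z + 1 = 0 := by
  have hb2 := sqrt_mul_self' _ (zsub_ne hz)
  have ha2 := sqrt_mul_self' _ (zadd_ne hz)
  unfold Jinv
  linear_combination ((z+1)^((1:ℂ)/2) * (z+1)^((1:ℂ)/2)) * hb2 + (z - 1) * ha2

lemma abs_Jinv_lt_one {z : ℂ} (hz : z ∉ Complex.ofReal '' Set.Icc (-1 : ℝ) 1) :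
    ‖Jinv z‖ < 1 := by
  have hK := key_re_pos hz
  set b := (z - 1) ^ ((1:ℂ)/2) with hbdef
  set a := (z + 1) ^ ((1:ℂ)/2) with hadef
  have hb2 : b * b = z - 1 := sqrt_mul_self' _ (zsub_ne hz)
  have ha2 : a * a = z + 1 := sqrt_mul_self' _ (zadd_ne hz)
  set s := b * a with hsdef
  have hss : s * s = z * z - 1 := by
    have : s * s = (b * b) * (a * a) := by ring
    rw [this, hb2, ha2]; ring
  have hprod : (z - s) * (z + s) = 1 := by linear_combination -hss
  have habs : ‖z - s‖ * ‖z + s‖ = 1 := by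
    rw [← norm_mul, hprod, norm_one]
  have h2z : a * a + b * b = 2 * z := by rw [hb2, ha2]; ring
  have h1 := congrArg Complex.re h2z
  have h2 := congrArg Complex.im h2z
  simp only [Complex.add_re, Complex.mul_re, Complex.mul_im, Complex.add_im,
    Complex.re_ofNat, Complex.im_ofNat] at h1 h2
  have hRe : 0 < (starRingEnd ℂ z * s).re := by
    have hexp : (starRingEnd ℂ z * s).re
        = z.re * (b.re * a.re - b.im * a.im) + z.im * (b.re * a.im + b.im * a.re) := by
      simp only [hsdef, Complex.mul_re, Complex.mul_im, Complex.conj_re, Complex.conj_im]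
      ring
    have hid : 2 * ((starRingEnd ℂ z * s).re)
        = (a.re*a.re + a.im*a.im + b.re*b.re + b.im*b.im) * (b.re * a.re + b.im * a.im) := by
      rw [hexp]
      linear_combination (-(b.re * a.re - b.im * a.im)) * h1 - (b.re * a.im + b.im * a.re) * h2
    nlinarith [hK, sq_nonneg (a.re - b.re), sq_nonneg (a.im - b.im)]
  have hns : Complex.normSq (z - s) < Complex.normSq (z + s) := by
    have hd : Complex.normSq (z + s) - Complex.normSq (z - s)
        = 4 * (starRingEnd ℂ z * s).re := by
      simp only [Complex.normSq_apply, Complex.sub_re, Complex.sub_im, Complex.add_re,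
        Complex.add_im, Complex.mul_re, Complex.mul_im, Complex.conj_re, Complex.conj_im]
      ring
    linarith
  have hlt : ‖z - s‖ < ‖z + s‖ := by
    rw [Complex.norm_def, Complex.norm_def]
    exact Real.sqrt_lt_sqrt (Complex.normSq_nonneg _) hns
  have h0 : 0 < ‖z - s‖ := by
    rcases (norm_nonneg (z - s)).lt_or_eq with h | h
    · exact h
    · rw [← h] at habs; simp at habs
  have hJ : Jinv z = z - s := rfl
  rw [hJ]
  nlinarith


lemma circle_avg {w : ℂ} (hw : ‖w‖ < 1) :
    (∫ θ in (0:ℝ)..(2*Real.pi), Real.log (‖circleMap 0 1 θ - w‖)) = 0 := by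
  set f : ℂ → ℂ := fun ζ => Complex.log (1 - (starRingEnd ℂ) w * ζ) with hf
  have hpos : ∀ ζ : ℂ, ‖ζ‖ ≤ 1 → 0 < (1 - (starRingEnd ℂ) w * ζ).re := by
    intro ζ hζ
    have h1 : ((starRingEnd ℂ) w * ζ).re ≤ ‖(starRingEnd ℂ) w * ζ‖ :=
      Complex.re_le_norm _
    have h2 : ‖(starRingEnd ℂ) w * ζ‖ ≤ ‖w‖ := by
      rw [norm_mul, Complex.norm_conj]
      nlinarith [norm_nonneg w, norm_nonneg ζ]
    simp only [Complex.sub_re, Complex.one_re]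
    linarith
  have hslit : ∀ ζ : ℂ, ‖ζ‖ ≤ 1 → (1 - (starRingEnd ℂ) w * ζ) ∈ Complex.slitPlane :=
    fun ζ hζ => Or.inl (hpos ζ hζ)
  have hdiff : DiffContOnCl ℂ f (Metric.ball 0 1) := by
    apply DifferentiableOn.diffContOnCl
    rw [closure_ball (0:ℂ) one_ne_zero]
    intro ζ hζ
    rw [Metric.mem_closedBall, dist_zero_right] at hζ
    have habs : ‖ζ‖ ≤ 1 := by exact hζ
    exact (((differentiableAt_const _).sub ((differentiableAt_const _).mul
      differentiableAt_id)).clog (hslit ζ habs)).differentiableWithinAt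
  have h0mem : (0:ℂ) ∈ Metric.ball (0:ℂ) 1 := by simp
  have hcauchy := hdiff.circleIntegral_sub_inv_smul h0mem
  have hf0 : f 0 = 0 := by simp [hf]
  rw [hf0, smul_zero] at hcauchy
  have hI : (∫ θ in (0:ℝ)..(2*Real.pi), Complex.I * f (circleMap 0 1 θ)) = 0 := by
    have heq : (∫ θ in (0:ℝ)..(2*Real.pi), Complex.I * f (circleMap 0 1 θ))
        = ∮ ζ in C(0, 1), (ζ - 0)⁻¹ • f ζ := by
      rw [circleIntegral]
      apply intervalIntegral.integral_congr
      intro θ _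
      have hne : circleMap 0 1 θ ≠ 0 := circleMap_ne_center one_ne_zero
      simp only [deriv_circleMap, sub_zero, smul_eq_mul]
      rw [mul_comm (circleMap 0 1 θ) Complex.I, mul_assoc, mul_inv_cancel_left₀ hne]
    rw [heq, hcauchy]
  rw [intervalIntegral.integral_const_mul, mul_eq_zero] at hI
  have hI2 : (∫ θ in (0:ℝ)..(2*Real.pi), f (circleMap 0 1 θ)) = 0 := by
    rcases hI with h | h
    · exact absurd h Complex.I_ne_zero
    · exact h
  have hcont : Continuous fun θ : ℝ => f (circleMap 0 1 θ) := by
    rw [continuous_iff_continuousAt]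
    intro θ
    have habs : ‖circleMap 0 1 θ‖ ≤ 1 := by
      rw [norm_circleMap_zero]; norm_num
    exact ContinuousAt.clog
      ((continuous_const.sub (continuous_const.mul (continuous_circleMap 0 1))).continuousAt)
      (hslit _ habs)
  have hre : ∀ θ : ℝ, (f (circleMap 0 1 θ)).re = Real.log (‖circleMap 0 1 θ - w‖) := by
    intro θ
    have habs : ‖circleMap 0 1 θ‖ = 1 := by rw [norm_circleMap_zero]; norm_num
    have hval : ‖1 - (starRingEnd ℂ) w * circleMap 0 1 θ‖
        = ‖circleMap 0 1 θ - w‖ := by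
      set ζ := circleMap 0 1 θ
      have hζ : ζ * (starRingEnd ℂ) ζ = 1 := by
        rw [Complex.mul_conj]
        simp [← Complex.sq_norm, habs]
      have : 1 - (starRingEnd ℂ) w * ζ = (starRingEnd ℂ) ((starRingEnd ℂ) ζ * (ζ - w)) := by
        simp only [map_mul, Complex.conj_conj, map_sub]
        linear_combination -hζ
      rw [this, Complex.norm_conj, norm_mul]
      have : ‖(starRingEnd ℂ) ζ‖ = 1 := by rw [Complex.norm_conj, habs]
      rw [this, one_mul]
    rw [hf]
    simp only [Complex.log_re, hval]
  calc (∫ θ in (0:ℝ)..(2*Real.pi), Real.log (‖circleMap 0 1 θ - w‖))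
      = ∫ θ in (0:ℝ)..(2*Real.pi), (f (circleMap 0 1 θ)).re := by
        apply intervalIntegral.integral_congr; intro θ _; exact (hre θ).symm
    _ = (∫ θ in (0:ℝ)..(2*Real.pi), f (circleMap 0 1 θ)).re := by
        rw [intervalIntegral.integral_of_le (by positivity),
          intervalIntegral.integral_of_le (by positivity)]
        exact integral_re (hcont.integrableOn_Ioc ..)
    _ = 0 := by rw [hI2]; rfl

/-- Log transform of `1/√(1-t²)`:
`ℒ[1/√(1-t²)](z) = -log|J₊⁻¹(z)| - log 2` for `z ∈ ℂ∖[-1,1]`. -/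
theorem log_transform_inv_sqrt (z : ℂ)
    (hz : z ∉ Complex.ofReal '' Set.Icc (-1 : ℝ) 1) :
    ((1 / Real.pi) *
        ∫ t in (-1 : ℝ)..1, Real.log (‖(t : ℂ) - z‖) / Real.sqrt (1 - t ^ 2))
      = -Real.log (‖Jinv z‖) - Real.log 2 := by
  set w := Jinv z with hwdef
  have hquad : w * w - 2 * z * w + 1 = 0 := Jinv_quad hz
  have hwlt : ‖w‖ < 1 := abs_Jinv_lt_one hz
  have hw0 : w ≠ 0 := by intro h; rw [h] at hquad; simp at hquad
  have hwabs : 0 < ‖w‖ := norm_pos_iff.mpr hw0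
  -- the image of cos
  have himg : Real.cos '' Ioo 0 Real.pi = Ioo (-1 : ℝ) 1 := by
    apply Subset.antisymm
    · rintro _ ⟨θ, hθ, rfl⟩
      have h0 : (0:ℝ) ∈ Icc (0:ℝ) Real.pi := ⟨le_rfl, Real.pi_pos.le⟩
      have hπ : Real.pi ∈ Icc (0:ℝ) Real.pi := ⟨Real.pi_pos.le, le_rfl⟩
      have hθ' : θ ∈ Icc (0:ℝ) Real.pi := ⟨hθ.1.le, hθ.2.le⟩
      constructor
      · have := Real.strictAntiOn_cos hθ' hπ hθ.2
        rwa [Real.cos_pi] at this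
      · have := Real.strictAntiOn_cos h0 hθ' hθ.1
        rwa [Real.cos_zero] at this
    · intro y hy
      refine ⟨Real.arccos y, ⟨Real.arccos_pos.2 hy.2, ?_⟩, Real.cos_arccos hy.1.le hy.2.le⟩
      refine lt_of_le_of_ne (Real.arccos_le_pi y) (fun h => ?_)
      have := Real.cos_arccos hy.1.le hy.2.le
      rw [h, Real.cos_pi] at this
      linarith [hy.1]
  -- change of variables t = cos θ
  have hcov : (∫ t in (-1 : ℝ)..1, Real.log (‖(t : ℂ) - z‖) / Real.sqrt (1 - t ^ 2))
      = ∫ θ in (0:ℝ)..Real.pi, Real.log (‖(Real.cos θ : ℂ) - z‖) := by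
    rw [intervalIntegral.integral_of_le (by norm_num : (-1:ℝ) ≤ 1),
      MeasureTheory.integral_Ioc_eq_integral_Ioo, ← himg,
      integral_image_eq_integral_abs_deriv_smul measurableSet_Ioo
        (fun x _ => (Real.hasDerivAt_cos x).hasDerivWithinAt)
        (Real.injOn_cos.mono Ioo_subset_Icc_self),
      intervalIntegral.integral_of_le Real.pi_pos.le,
      MeasureTheory.integral_Ioc_eq_integral_Ioo]
    apply MeasureTheory.setIntegral_congr_fun measurableSet_Ioo
    intro θ hθ
    have hsin : 0 < Real.sin θ := Real.sin_pos_of_pos_of_lt_pi hθ.1 hθ.2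
    have hsq : Real.sqrt (1 - Real.cos θ ^ 2) = Real.sin θ := by
      rw [show (1 : ℝ) - Real.cos θ ^ 2 = Real.sin θ ^ 2 by
        nlinarith [Real.sin_sq_add_cos_sq θ]]
      exact Real.sqrt_sq hsin.le
    simp only [smul_eq_mul, abs_neg, abs_of_pos hsin, hsq]
    field_simp
  -- pointwise factorization
  have hfact : ∀ θ : ℝ, Real.log (‖(Real.cos θ : ℂ) - z‖)
      = Real.log (‖circleMap 0 1 θ - w‖)
        + Real.log (‖circleMap 0 1 (2 * Real.pi - θ) - w‖)
        - (Real.log 2 + Real.log (‖w‖)) := by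
    intro θ
    set E := Complex.exp ((θ:ℂ) * Complex.I) with hE
    set E' := Complex.exp (-(θ:ℂ) * Complex.I) with hE'
    have hEE' : E * E' = 1 := by
      rw [hE, hE', ← Complex.exp_add]
      norm_num
    have hcm : circleMap 0 1 θ = E := by simp [circleMap, hE]
    have hcm' : circleMap 0 1 (2 * Real.pi - θ) = E' := by
      simp only [circleMap, Complex.ofReal_one, one_mul, zero_add]
      rw [show ((2 * Real.pi - θ : ℝ) : ℂ) * Complex.I
          = 2 * Real.pi * Complex.I + -(θ:ℂ) * Complex.I by push_cast; ring,
        Complex.exp_add, Complex.exp_two_pi_mul_I, one_mul, hE']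
    have hcos : (Real.cos θ : ℂ) = (E + E') / 2 := by
      rw [Complex.ofReal_cos, Complex.cos, hE, hE']
    have hiden : ((Real.cos θ : ℂ) - z) * (2 * w) = -((E - w) * (E' - w)) := by
      rw [hcos]
      linear_combination hEE' + hquad
    have habs : ‖(Real.cos θ : ℂ) - z‖ * (2 * ‖w‖)
        = ‖E - w‖ * ‖E' - w‖ := by
      have := congrArg (‖·‖) hiden
      rwa [norm_mul, norm_neg, norm_mul, norm_mul, (by norm_num : ‖(2:ℂ)‖ = 2)] at this
    have hEabs : ‖E‖ = 1 := by
      rw [hE, Complex.norm_exp]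
      norm_num [Complex.mul_re, Complex.ofReal_re, Complex.ofReal_im, Complex.I_re, Complex.I_im]
    have hE'abs : ‖E'‖ = 1 := by
      rw [hE', Complex.norm_exp]
      norm_num [Complex.mul_re, Complex.neg_re, Complex.neg_im, Complex.ofReal_re,
        Complex.ofReal_im, Complex.I_re, Complex.I_im]
    have hEw : 0 < ‖E - w‖ := by
      have h2 := norm_sub_norm_le E w
      rw [hEabs] at h2
      linarith
    have hE'w : 0 < ‖E' - w‖ := by
      have h2 := norm_sub_norm_le E' w
      rw [hE'abs] at h2
      linarith
    have hcz : 0 < ‖(Real.cos θ : ℂ) - z‖ := by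
      rcases (norm_nonneg ((Real.cos θ : ℂ) - z)).lt_or_eq with h | h
      · exact h
      · exfalso
        have h0 : ((Real.cos θ : ℂ) - z) = 0 := by
          rwa [eq_comm, norm_eq_zero] at h
        exact hz ⟨Real.cos θ, ⟨Real.neg_one_le_cos θ, Real.cos_le_one θ⟩, by linear_combination h0⟩
    have hlog := congrArg Real.log habs
    rw [Real.log_mul (ne_of_gt hcz) (by positivity), Real.log_mul (by norm_num) (ne_of_gt hwabs),
      Real.log_mul (ne_of_gt hEw) (ne_of_gt hE'w)] at hlog
    rw [hcm, hcm']
    linarith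
  -- continuity and positivity on the circle
  have hpos' : ∀ x : ℝ, ‖circleMap 0 1 x - w‖ ≠ 0 := by
    intro x
    have habs1 : ‖circleMap 0 1 x‖ = 1 := by rw [norm_circleMap_zero]; norm_num
    have h2 := norm_sub_norm_le (circleMap 0 1 x) w
    rw [habs1] at h2
    intro h
    rw [h] at h2
    linarith
  have hcontA : Continuous fun x : ℝ => Real.log (‖circleMap 0 1 x - w‖) :=
    (continuous_norm.comp ((continuous_circleMap 0 1).sub continuous_const)).log hpos'
  have hcontB : Continuous fun x : ℝ =>
      Real.log (‖circleMap 0 1 (2 * Real.pi - x) - w‖) :=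
    hcontA.comp (continuous_const.sub continuous_id)
  -- the two half-circle integrals sum to zero
  have hAB : (∫ θ in (0:ℝ)..Real.pi, Real.log (‖circleMap 0 1 θ - w‖))
      + (∫ θ in (0:ℝ)..Real.pi, Real.log (‖circleMap 0 1 (2 * Real.pi - θ) - w‖))
      = 0 := by
    have hsub : (∫ θ in (0:ℝ)..Real.pi,
          Real.log (‖circleMap 0 1 (2 * Real.pi - θ) - w‖))
        = ∫ θ in Real.pi..(2 * Real.pi), Real.log (‖circleMap 0 1 θ - w‖) := by
      rw [intervalIntegral.integral_comp_sub_left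
        (fun θ => Real.log (‖circleMap 0 1 θ - w‖)) (2 * Real.pi)]
      rw [show 2 * Real.pi - Real.pi = Real.pi by ring, show 2 * Real.pi - 0 = 2 * Real.pi by ring]
    rw [hsub, intervalIntegral.integral_add_adjacent_intervals
      (hcontA.intervalIntegrable _ _) (hcontA.intervalIntegrable _ _)]
    exact circle_avg hwlt
  -- put everything together
  have hmain : (∫ θ in (0:ℝ)..Real.pi, Real.log (‖(Real.cos θ : ℂ) - z‖))
      = -(Real.pi * (Real.log 2 + Real.log (‖w‖))) := by
    have hre : (∫ θ in (0:ℝ)..Real.pi, Real.log (‖(Real.cos θ : ℂ) - z‖))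
        = ∫ θ in (0:ℝ)..Real.pi,
            (Real.log (‖circleMap 0 1 θ - w‖)
              + Real.log (‖circleMap 0 1 (2 * Real.pi - θ) - w‖)
              - (Real.log 2 + Real.log (‖w‖))) := by
      apply intervalIntegral.integral_congr
      intro θ _
      exact hfact θ
    rw [hre, intervalIntegral.integral_sub
        ((hcontA.intervalIntegrable _ _).add (hcontB.intervalIntegrable _ _))
        (intervalIntegrable_const),
      intervalIntegral.integral_add (hcontA.intervalIntegrable _ _)
        (hcontB.intervalIntegrable _ _),
      intervalIntegral.integral_const, hAB]
    simp [smul_eq_mul]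
  rw [hcov, hmain]
  have hπ : Real.pi ≠ 0 := Real.pi_ne_zero
  field_simp
  ring
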